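/- If E ⊆ 𝔽_q² and 𝓛 is a collection of lines in 𝔽_q² with |E|·|𝓛| > q³, then there exists a point of E incident to a line of 𝓛. -/

import Mathlib

open Finset
open scoped Classical

/-- An affine line in `F × F`, given as the finset of solutions of `a*x + b*y = c`
with `(a,b) ≠ (0,0)`. -/
def IsLine {F : Type*} [Field F] [Fintype F] [DecidableEq F] (ℓ : Finset (F × F)) : Prop :=
  ∃ a b c : F, (a, b) ≠ (0, 0) ∧
    ℓ = Finset.univ.filter (fun p : F × F => a * p.1 + b * p.2 = c)

namespace IncAux

set_option linter.unusedSectionVars false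

variable {F : Type*} [Field F] [Fintype F] [DecidableEq F]

def lineOf (a b c : F) : Finset (F × F) :=
  Finset.univ.filter (fun p : F × F => a * p.1 + b * p.2 = c)

lemma mem_lineOf {a b c : F} {p : F × F} : p ∈ lineOf a b c ↔ a * p.1 + b * p.2 = c := by
  simp [lineOf]

lemma isLine_lineOf {a b c : F} (h : (a, b) ≠ (0, 0)) : IsLine (lineOf a b c) :=
  ⟨a, b, c, h, rfl⟩

lemma lineOf_card {a b c : F} (h : (a, b) ≠ (0, 0)) :
    (lineOf a b c).card = Fintype.card F := by
  rcases eq_or_ne b 0 with hb | hb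
  · subst hb
    have ha : a ≠ 0 := by rintro rfl; exact h rfl
    have : lineOf a 0 c = Finset.univ.image (fun y : F => (c * a⁻¹, y)) := by
      ext p
      simp only [mem_lineOf, Finset.mem_image, Finset.mem_univ, true_and]
      constructor
      · intro hp
        refine ⟨p.2, ?_⟩
        have h1 : c * a⁻¹ = p.1 := by
          rw [mul_inv_eq_iff_eq_mul₀ ha]
          linear_combination -hp
        exact Prod.ext h1 rfl
      · rintro ⟨y, rfl⟩
        field_simp
        ring
    rw [this, Finset.card_image_of_injective _ (fun x y hxy => congrArg Prod.snd hxy),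
      Finset.card_univ]
  · have : lineOf a b c = Finset.univ.image (fun x : F => (x, (c - a * x) * b⁻¹)) := by
      ext p
      simp only [mem_lineOf, Finset.mem_image, Finset.mem_univ, true_and]
      constructor
      · intro hp
        refine ⟨p.1, ?_⟩
        have h2 : (c - a * p.1) * b⁻¹ = p.2 := by
          rw [mul_inv_eq_iff_eq_mul₀ hb]
          linear_combination -hp
        exact Prod.ext rfl h2
      · rintro ⟨x, rfl⟩
        field_simp
        ring
    rw [this, Finset.card_image_of_injective _ (fun x y hxy => congrArg Prod.fst hxy),
      Finset.card_univ]

/-- the pencil of lines through `p`, indexed by `Option F` (slope or vertical) -/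
noncomputable def pencil (p : F × F) (o : Option F) : Finset (F × F) :=
  o.elim (lineOf 1 0 p.1) (fun m => lineOf m (-1) (m * p.1 - p.2))

lemma isLine_pencil (p : F × F) (o : Option F) : IsLine (pencil p o) := by
  cases o with
  | none => exact isLine_lineOf (by simp)
  | some m => exact isLine_lineOf (by simp)

lemma mem_pencil (p : F × F) (o : Option F) : p ∈ pencil p o := by
  cases o with
  | none => simp [pencil, mem_lineOf]
  | some m => simp [pencil, mem_lineOf]; ring

lemma pencil_injective (p : F × F) : Function.Injective (pencil p) := by
  intro o1 o2 heq
  have key : ∀ m : F, (p.1 + 1, p.2 + m) ∈ pencil p (some m) := by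
    intro m; simp [pencil, mem_lineOf]; ring
  cases o1 with
  | none =>
    cases o2 with
    | none => rfl
    | some m =>
      exfalso
      have := (heq ▸ (key m) : (p.1 + 1, p.2 + m) ∈ pencil p none)
      simp [pencil, mem_lineOf] at this
  | some m1 =>
    cases o2 with
    | none =>
      exfalso
      have := (heq ▸ (key m1) : (p.1 + 1, p.2 + m1) ∈ pencil p none)
      simp [pencil, mem_lineOf] at this
    | some m2 =>
      have := (heq ▸ (key m1) : (p.1 + 1, p.2 + m1) ∈ pencil p (some m2))
      simp [pencil, mem_lineOf] at this
      have : m2 = m1 := by linear_combination this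
      rw [this]

lemma line_through_eq_pencil {a b c : F} (h : (a, b) ≠ (0, 0)) {p : F × F}
    (hp : a * p.1 + b * p.2 = c) : ∃ o : Option F, lineOf a b c = pencil p o := by
  rcases eq_or_ne b 0 with hb | hb
  · subst hb
    have ha : a ≠ 0 := by rintro rfl; exact h rfl
    refine ⟨none, ?_⟩
    ext x
    simp only [mem_lineOf, pencil, Option.elim]
    constructor
    · intro hx
      have : a * x.1 = a * p.1 := by linear_combination hx - hp
      have := mul_left_cancel₀ ha this
      linear_combination this
    · intro hx
      have hx1 : x.1 = p.1 := by linear_combination hx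
      rw [hx1]; linear_combination hp
  · refine ⟨some (-a * b⁻¹), ?_⟩
    ext x
    simp only [mem_lineOf, pencil, Option.elim]
    have hb' : b * b⁻¹ = 1 := mul_inv_cancel₀ hb
    constructor
    · intro hx
      have h3 : (-b) * (-a * b⁻¹ * x.1 + -1 * x.2) = (-b) * (-a * b⁻¹ * p.1 - p.2) := by
        linear_combination hx - hp + (a * x.1 - a * p.1) * hb'
      exact mul_left_cancel₀ (neg_ne_zero.2 hb) h3
    · intro hx
      linear_combination hp + (-b) * hx - (a * x.1 - a * p.1) * hb'

lemma lines_through_point (p : F × F) :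
    ((Finset.univ.filter (IsLine (F := F))).filter (fun ℓ => p ∈ ℓ)).card
      = Fintype.card F + 1 := by
  have hset : (Finset.univ.filter (IsLine (F := F))).filter (fun ℓ => p ∈ ℓ)
      = (Finset.univ : Finset (Option F)).image (pencil p) := by
    ext ℓ
    simp only [Finset.mem_filter, Finset.mem_univ, true_and, Finset.mem_image]
    constructor
    · rintro ⟨⟨a, b, c, hab, rfl⟩, hp⟩
      obtain ⟨o, ho⟩ := line_through_eq_pencil hab ((mem_lineOf (a := a)).1 hp)
      exact ⟨o, ho.symm⟩
    · rintro ⟨o, rfl⟩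
      exact ⟨isLine_pencil p o, mem_pencil p o⟩
  rw [hset, Finset.card_image_of_injective _ (pencil_injective p), Finset.card_univ,
    Fintype.card_option]

def lineThru (p p' : F × F) : Finset (F × F) :=
  lineOf (p'.2 - p.2) (p.1 - p'.1) ((p'.2 - p.2) * p.1 + (p.1 - p'.1) * p.2)

lemma lineThru_ab_ne {p p' : F × F} (hne : p ≠ p') :
    (p'.2 - p.2, p.1 - p'.1) ≠ ((0 : F), (0 : F)) := by
  intro heq
  rw [Prod.mk.injEq] at heq
  exact hne (Prod.ext (sub_eq_zero.mp heq.2) (sub_eq_zero.mp heq.1).symm)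

lemma mem_lineThru_left (p p' : F × F) : p ∈ lineThru p p' := by
  simp only [lineThru, mem_lineOf]

lemma mem_lineThru_right (p p' : F × F) : p' ∈ lineThru p p' := by
  simp only [lineThru, mem_lineOf]; ring

lemma line_eq_lineThru {a b c : F} (hab : (a, b) ≠ (0, 0)) {p p' : F × F} (hne : p ≠ p')
    (hp : a * p.1 + b * p.2 = c) (hp' : a * p'.1 + b * p'.2 = c) :
    lineOf a b c = lineThru p p' := by
  have huv : a * (p'.1 - p.1) + b * (p'.2 - p.2) = 0 := by linear_combination hp' - hp
  have hexists : ∃ l : F, l ≠ 0 ∧ a = l * (p'.2 - p.2) ∧ b = -(l * (p'.1 - p.1)) := by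
    rcases eq_or_ne (p'.1 - p.1) 0 with hu | hu
    · have hv : p'.2 - p.2 ≠ 0 := by
        intro hv0
        exact hne (Prod.ext (sub_eq_zero.mp hu).symm (sub_eq_zero.mp hv0).symm)
      have hb0 : b = 0 := by
        have h5 : b * (p'.2 - p.2) = 0 := by linear_combination huv - a * hu
        exact (mul_eq_zero.mp h5).resolve_right hv
      have hinv : (p'.2 - p.2) * (p'.2 - p.2)⁻¹ = 1 := mul_inv_cancel₀ hv
      refine ⟨a * (p'.2 - p.2)⁻¹, ?_, ?_, ?_⟩
      · intro hl
        have ha0 : a = 0 := by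
          have := congrArg (· * (p'.2 - p.2)) hl
          simpa [mul_assoc, inv_mul_cancel₀ hv] using this
        exact hab (Prod.ext ha0 hb0)
      · linear_combination -a * hinv
      · linear_combination hb0 + (a * (p'.2 - p.2)⁻¹) * hu
    · have hinv : (p'.1 - p.1) * (p'.1 - p.1)⁻¹ = 1 := mul_inv_cancel₀ hu
      refine ⟨-(b * (p'.1 - p.1)⁻¹), ?_, ?_, ?_⟩
      · intro hl
        have hb0 : b = 0 := by
          have h6 : b * ((p'.1 - p.1)⁻¹ * (p'.1 - p.1)) = 0 := by
            linear_combination -(p'.1 - p.1) * hl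
          simpa [inv_mul_cancel₀ hu] using h6
        have ha0 : a = 0 := by
          have h5 : a * (p'.1 - p.1) = 0 := by linear_combination huv - (p'.2 - p.2) * hb0
          exact (mul_eq_zero.mp h5).resolve_right hu
        exact hab (Prod.ext ha0 hb0)
      · linear_combination (p'.1 - p.1)⁻¹ * huv - a * hinv
      · linear_combination -b * hinv
  obtain ⟨l, hl0, ha, hb2⟩ := hexists
  ext x
  simp only [mem_lineOf, lineThru]
  constructor
  · intro hx
    have h3 : l * ((p'.2 - p.2) * x.1 + (p.1 - p'.1) * x.2)
        = l * ((p'.2 - p.2) * p.1 + (p.1 - p'.1) * p.2) := by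
      linear_combination hx - hp + (p.1 - x.1) * ha + (p.2 - x.2) * hb2
    exact mul_left_cancel₀ hl0 h3
  · intro hx
    linear_combination l * hx + hp + (x.1 - p.1) * ha + (x.2 - p.2) * hb2

lemma lines_through_pair {p p' : F × F} (hne : p ≠ p') :
    ((Finset.univ.filter (IsLine (F := F))).filter (fun ℓ => p ∈ ℓ ∧ p' ∈ ℓ)).card = 1 := by
  have hset : (Finset.univ.filter (IsLine (F := F))).filter (fun ℓ => p ∈ ℓ ∧ p' ∈ ℓ)
      = {lineThru p p'} := by
    ext ℓ
    simp only [Finset.mem_filter, Finset.mem_univ, true_and, Finset.mem_singleton]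
    constructor
    · rintro ⟨⟨a, b, c, hab, rfl⟩, hp, hp'⟩
      exact line_eq_lineThru hab hne (mem_lineOf.1 hp) (mem_lineOf.1 hp')
    · rintro rfl
      exact ⟨isLine_lineOf (lineThru_ab_ne hne), mem_lineThru_left p p',
        mem_lineThru_right p p'⟩
  rw [hset, Finset.card_singleton]

lemma inter_card_eq_sum (E : Finset (F × F)) (ℓ : Finset (F × F)) :
    (E ∩ ℓ).card = ∑ p ∈ E, if p ∈ ℓ then 1 else 0 := by
  rw [← Finset.filter_mem_eq_inter, Finset.card_filter]

lemma sum_inter_card (E : Finset (F × F)) :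
    ∑ ℓ ∈ Finset.univ.filter (IsLine (F := F)), (E ∩ ℓ).card
      = E.card * (Fintype.card F + 1) := by
  calc ∑ ℓ ∈ Finset.univ.filter (IsLine (F := F)), (E ∩ ℓ).card
      = ∑ ℓ ∈ Finset.univ.filter (IsLine (F := F)), ∑ p ∈ E, if p ∈ ℓ then 1 else 0 :=
        Finset.sum_congr rfl (fun ℓ _ => inter_card_eq_sum E ℓ)
    _ = ∑ p ∈ E, ∑ ℓ ∈ Finset.univ.filter (IsLine (F := F)), if p ∈ ℓ then 1 else 0 :=
        Finset.sum_comm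
    _ = ∑ p ∈ E, (Fintype.card F + 1) := by
        refine Finset.sum_congr rfl (fun p _ => ?_)
        rw [← Finset.card_filter]
        exact lines_through_point p
    _ = E.card * (Fintype.card F + 1) := by rw [Finset.sum_const, smul_eq_mul]

lemma sum_inter_card_sq (E : Finset (F × F)) :
    ∑ ℓ ∈ Finset.univ.filter (IsLine (F := F)), (E ∩ ℓ).card ^ 2
      = E.card * (Fintype.card F + E.card) := by
  calc ∑ ℓ ∈ Finset.univ.filter (IsLine (F := F)), (E ∩ ℓ).card ^ 2
      = ∑ ℓ ∈ Finset.univ.filter (IsLine (F := F)),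
          ∑ p ∈ E, ∑ p' ∈ E, if p ∈ ℓ ∧ p' ∈ ℓ then 1 else 0 := by
        refine Finset.sum_congr rfl (fun ℓ _ => ?_)
        rw [inter_card_eq_sum E ℓ, sq, Finset.sum_mul_sum]
        refine Finset.sum_congr rfl (fun p _ => Finset.sum_congr rfl (fun p' _ => ?_))
        by_cases h1 : p ∈ ℓ <;> by_cases h2 : p' ∈ ℓ <;> simp [h1, h2]
    _ = ∑ p ∈ E, ∑ p' ∈ E, ∑ ℓ ∈ Finset.univ.filter (IsLine (F := F)),
          if p ∈ ℓ ∧ p' ∈ ℓ then 1 else 0 := by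
        rw [Finset.sum_comm]
        exact Finset.sum_congr rfl (fun p _ => Finset.sum_comm)
    _ = ∑ p ∈ E, ∑ p' ∈ E, ((if p = p' then Fintype.card F else 0) + 1) := by
        refine Finset.sum_congr rfl (fun p _ => Finset.sum_congr rfl (fun p' _ => ?_))
        rw [← Finset.card_filter]
        rcases eq_or_ne p p' with rfl | hne
        · simp only [and_self]
          rw [if_pos trivial, lines_through_point p]
        · rw [if_neg hne, lines_through_pair hne]
    _ = ∑ p ∈ E, (Fintype.card F + E.card) := by
        refine Finset.sum_congr rfl (fun p hp => ?_)
        rw [Finset.sum_add_distrib, Finset.sum_ite_eq, if_pos hp, Finset.sum_const,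
          smul_eq_mul, mul_one]
    _ = E.card * (Fintype.card F + E.card) := by rw [Finset.sum_const, smul_eq_mul]

lemma card_lines_mul :
    (Finset.univ.filter (IsLine (F := F))).card * Fintype.card F
      = Fintype.card F ^ 2 * (Fintype.card F + 1) := by
  have h1 := sum_inter_card (Finset.univ : Finset (F × F))
  have h2 : ∀ ℓ ∈ Finset.univ.filter (IsLine (F := F)),
      ((Finset.univ : Finset (F × F)) ∩ ℓ).card = Fintype.card F := by
    intro ℓ hℓ
    rw [Finset.univ_inter]
    obtain ⟨a, b, c, hab, rfl⟩ := (Finset.mem_filter.1 hℓ).2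
    exact lineOf_card hab
  rw [Finset.sum_congr rfl h2, Finset.sum_const, smul_eq_mul] at h1
  rw [h1, Finset.card_univ, Fintype.card_prod]
  ring

lemma card_lines :
    (Finset.univ.filter (IsLine (F := F))).card
      = Fintype.card F * (Fintype.card F + 1) := by
  have hq : 0 < Fintype.card F := Fintype.card_pos
  apply Nat.eq_of_mul_eq_mul_right hq
  rw [card_lines_mul]
  ring

end IncAux

theorem incidence_exists
    {F : Type*} [Field F] [Fintype F] [DecidableEq F] (q : ℕ) (hq : Fintype.card F = q)
    (E : Finset (F × F)) (𝓛 : Finset (Finset (F × F))) (h𝓛 : ∀ ℓ ∈ 𝓛, IsLine ℓ)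
    (h : E.card * 𝓛.card > q ^ 3) :
    ∃ p ∈ E, ∃ ℓ ∈ 𝓛, p ∈ ℓ := by
  classical
  subst hq
  by_contra hcon
  push_neg at hcon
  have hsub : 𝓛 ⊆ Finset.univ.filter (IsLine (F := F)) :=
    fun ℓ hℓ => Finset.mem_filter.2 ⟨Finset.mem_univ _, h𝓛 ℓ hℓ⟩
  have hzero : ∀ ℓ ∈ 𝓛, (E ∩ ℓ).card = 0 := by
    intro ℓ hℓ
    rw [Finset.card_eq_zero, Finset.eq_empty_iff_forall_notMem]
    intro p hp
    rw [Finset.mem_inter] at hp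
    exact hcon p hp.1 ℓ hℓ hp.2
  have hS1 : (∑ ℓ ∈ Finset.univ.filter (IsLine (F := F)), ((E ∩ ℓ).card : ℤ))
      = (E.card : ℤ) * ((Fintype.card F : ℤ) + 1) := by
    exact_mod_cast IncAux.sum_inter_card E
  have hS2 : (∑ ℓ ∈ Finset.univ.filter (IsLine (F := F)), ((E ∩ ℓ).card : ℤ) ^ 2)
      = (E.card : ℤ) * ((Fintype.card F : ℤ) + E.card) := by
    exact_mod_cast IncAux.sum_inter_card_sq E
  have key : ∑ ℓ ∈ Finset.univ.filter (IsLine (F := F)),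
        ((Fintype.card F : ℤ) * (E ∩ ℓ).card - E.card) ^ 2
      = (E.card : ℤ) * (Fintype.card F : ℤ) ^ 3 - (Fintype.card F : ℤ) * (E.card : ℤ) ^ 2 := by
    have expand : ∀ ℓ ∈ Finset.univ.filter (IsLine (F := F)),
        ((Fintype.card F : ℤ) * (E ∩ ℓ).card - E.card) ^ 2
          = (Fintype.card F : ℤ) ^ 2 * ((E ∩ ℓ).card : ℤ) ^ 2
            - 2 * (Fintype.card F : ℤ) * (E.card : ℤ) * ((E ∩ ℓ).card : ℤ)
            + (E.card : ℤ) ^ 2 := fun ℓ _ => by ring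
    rw [Finset.sum_congr rfl expand, Finset.sum_add_distrib, Finset.sum_sub_distrib,
      ← Finset.mul_sum, ← Finset.mul_sum, hS1, hS2, Finset.sum_const, nsmul_eq_mul,
      IncAux.card_lines]
    push_cast
    ring
  have hle : (𝓛.card : ℤ) * (E.card : ℤ) ^ 2
      ≤ (E.card : ℤ) * (Fintype.card F : ℤ) ^ 3 - (Fintype.card F : ℤ) * (E.card : ℤ) ^ 2 := by
    rw [← key]
    calc (𝓛.card : ℤ) * (E.card : ℤ) ^ 2
        = ∑ ℓ ∈ 𝓛, ((Fintype.card F : ℤ) * (E ∩ ℓ).card - E.card) ^ 2 := by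
          have hconst : ∀ ℓ ∈ 𝓛,
              ((Fintype.card F : ℤ) * (E ∩ ℓ).card - E.card) ^ 2 = (E.card : ℤ) ^ 2 := by
            intro ℓ hℓ
            rw [hzero ℓ hℓ]
            push_cast
            ring
          rw [Finset.sum_congr rfl hconst, Finset.sum_const, nsmul_eq_mul]
      _ ≤ _ := Finset.sum_le_sum_of_subset_of_nonneg hsub (fun _ _ _ => sq_nonneg _)
  have hE : 0 < E.card := by
    rcases Nat.eq_zero_or_pos E.card with h0 | h0
    · rw [h0] at h; simp at h
    · exact h0
  have hE' : (0 : ℤ) < (E.card : ℤ) := by exact_mod_cast hE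
  have h' : ((Fintype.card F : ℤ)) ^ 3 < (E.card : ℤ) * (𝓛.card : ℤ) := by exact_mod_cast h
  have hq0 : (0 : ℤ) ≤ (Fintype.card F : ℤ) * (E.card : ℤ) ^ 2 := by positivity
  nlinarith [mul_lt_mul_of_pos_right h' hE', hle, hq0]
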